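/- arXiv:1803.11528 — 4 statements merged into one kernel-verified Lean document; each statement's English description precedes it below -/
import Mathlib

section
/- Let n ≥ 2 and let H be the subgroup of SL_n(ℤ) consisting of matrices M(Id, v) = [[Id, v],[0,1]] with v ∈ ℤ^{n-1}. Then the normalizer of H in SL_n(ℤ) consists exactly of the matrices of the form [[B, x],[0, ε]] where B ∈ GL_{n-1}(ℤ), x ∈ ℤ^{n-1}, ε = ±1, and det(B) = ε. -/
open Matrix
def Hsub (m : ℕ) : Subgroup (Matrix.SpecialLinearGroup (Fin m ⊕ Unit) ℤ) where
  carrier := {g | ∃ v : Fin m → ℤ,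
    (g : Matrix (Fin m ⊕ Unit) (Fin m ⊕ Unit) ℤ) =
      Matrix.fromBlocks 1 (Matrix.of fun i (_ : Unit) => v i) 0 1}
  one_mem' := ⟨0, by
    ext (i | i) (j | j) <;>
      simp [Matrix.SpecialLinearGroup.coe_one, Matrix.one_apply]⟩
  mul_mem' := by
    rintro a b ⟨v, hv⟩ ⟨w, hw⟩
    refine ⟨v + w, ?_⟩
    rw [Matrix.SpecialLinearGroup.coe_mul, hv, hw, Matrix.fromBlocks_multiply]
    ext (i | i) (j | j) <;> simp [add_comm]
  inv_mem' := by
    rintro a ⟨v, hv⟩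
    refine ⟨-v, ?_⟩
    have h : (a : Matrix (Fin m ⊕ Unit) (Fin m ⊕ Unit) ℤ) *
        Matrix.fromBlocks 1 (Matrix.of fun i (_ : Unit) => (-v) i) 0 1 = 1 := by
      rw [hv, Matrix.fromBlocks_multiply]
      ext (i | i) (j | j) <;> simp [Matrix.one_apply]
    calc (↑(a⁻¹) : Matrix (Fin m ⊕ Unit) (Fin m ⊕ Unit) ℤ)
        = ↑(a⁻¹) * ((a : Matrix (Fin m ⊕ Unit) (Fin m ⊕ Unit) ℤ) *
            Matrix.fromBlocks 1 (Matrix.of fun i (_ : Unit) => (-v) i) 0 1) := by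
          rw [h, mul_one]
      _ = Matrix.fromBlocks 1 (Matrix.of fun i (_ : Unit) => (-v) i) 0 1 := by
          rw [← mul_assoc, ← Matrix.SpecialLinearGroup.coe_mul, inv_mul_cancel,
            Matrix.SpecialLinearGroup.coe_one, one_mul]


section Aux
open Matrix
variable {m : ℕ}

def colM (x : Fin m → ℤ) : Matrix (Fin m) Unit ℤ := Matrix.of fun i _ => x i
def scM (ε : ℤ) : Matrix Unit Unit ℤ := Matrix.of fun _ _ => ε
def TM (B : Matrix (Fin m) (Fin m) ℤ) (x : Fin m → ℤ) (ε : ℤ) :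
    Matrix (Fin m ⊕ Unit) (Fin m ⊕ Unit) ℤ := fromBlocks B (colM x) 0 (scM ε)

lemma scM_one : (scM 1 : Matrix Unit Unit ℤ) = 1 := by
  ext _ _; simp [scM, Matrix.one_apply]

lemma TM_one : (TM 1 0 1 : Matrix (Fin m ⊕ Unit) (Fin m ⊕ Unit) ℤ) = 1 := by
  rw [TM, scM_one, show (colM (0 : Fin m → ℤ)) = 0 by ext i j; simp [colM]]
  exact fromBlocks_one

lemma TM_mul (B₁ B₂ : Matrix (Fin m) (Fin m) ℤ) (x₁ x₂ : Fin m → ℤ) (ε₁ ε₂ : ℤ) :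
    TM B₁ x₁ ε₁ * TM B₂ x₂ ε₂ = TM (B₁ * B₂) (B₁ *ᵥ x₂ + ε₂ • x₁) (ε₁ * ε₂) := by
  simp only [TM, fromBlocks_multiply]
  have h1 : B₁ * B₂ + colM x₁ * (0 : Matrix Unit (Fin m) ℤ) = B₁ * B₂ := by
    rw [Matrix.mul_zero, add_zero]
  have h2 : B₁ * colM x₂ + colM x₁ * scM ε₂ = colM (B₁ *ᵥ x₂ + ε₂ • x₁) := by
    ext i j; simp [colM, scM, Matrix.mul_apply, mulVec, dotProduct, mul_comm]
  have h3 : (0 : Matrix Unit (Fin m) ℤ) * B₂ + scM ε₁ * (0 : Matrix Unit (Fin m) ℤ)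
      = (0 : Matrix Unit (Fin m) ℤ) := by simp
  have h4 : (0 : Matrix Unit (Fin m) ℤ) * colM x₂ + scM ε₁ * scM ε₂ = scM (ε₁ * ε₂) := by
    ext i j; simp [colM, scM, Matrix.mul_apply]
  rw [h1, h2, h3, h4]

lemma TM_det (B : Matrix (Fin m) (Fin m) ℤ) (x : Fin m → ℤ) (ε : ℤ) :
    (TM B x ε).det = B.det * ε := by
  rw [TM, det_fromBlocks_zero₂₁]
  congr 1
  rw [Matrix.det_unique]
  rfl

lemma mem_Hsub_iff (h : Matrix.SpecialLinearGroup (Fin m ⊕ Unit) ℤ) :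
    h ∈ Hsub m ↔ ∃ v : Fin m → ℤ,
      (h : Matrix (Fin m ⊕ Unit) (Fin m ⊕ Unit) ℤ) = TM 1 v 1 := by
  constructor
  · rintro ⟨v, hv⟩; exact ⟨v, by rw [hv, TM, scM_one]; rfl⟩
  · rintro ⟨v, hv⟩; exact ⟨v, by rw [hv, TM, scM_one]; rfl⟩

end Aux

/-- The normalizer of H in SL_n(ℤ) (n = m+1 ≥ 2) consists exactly of the matrices
[[B, x],[0, ε]] with B ∈ GL_{n-1}(ℤ) (i.e. det B = ±1), ε = ±1 and det B = ε. -/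
theorem stmt_7 (m : ℕ) (hm : 1 ≤ m) (g : Matrix.SpecialLinearGroup (Fin m ⊕ Unit) ℤ) :
    g ∈ Subgroup.normalizer (Hsub m : Set (Matrix.SpecialLinearGroup (Fin m ⊕ Unit) ℤ)) ↔
      ∃ (B : Matrix (Fin m) (Fin m) ℤ) (x : Fin m → ℤ) (ε : ℤ),
        (ε = 1 ∨ ε = -1) ∧ B.det = ε ∧
        (g : Matrix (Fin m ⊕ Unit) (Fin m ⊕ Unit) ℤ) =
          Matrix.fromBlocks B (Matrix.of fun i (_ : Unit) => x i) 0
            (Matrix.of fun (_ : Unit) (_ : Unit) => ε) := by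

  constructor
  · intro hg
    rw [Subgroup.mem_normalizer_iff] at hg
    -- bottom-left block of g is zero
    have key : ∀ j, (g : Matrix (Fin m ⊕ Unit) (Fin m ⊕ Unit) ℤ) (Sum.inr ()) (Sum.inl j) = 0 := by
      intro j
      have hmem : (⟨TM 1 (Pi.single j 1) 1, by rw [TM_det]; simp⟩ :
          Matrix.SpecialLinearGroup (Fin m ⊕ Unit) ℤ) ∈ Hsub m :=
        (mem_Hsub_iff _).mpr ⟨Pi.single j 1, rfl⟩
      obtain ⟨w, hw⟩ := (mem_Hsub_iff _).mp ((hg _).mp hmem)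
      have h2 : (g : Matrix (Fin m ⊕ Unit) (Fin m ⊕ Unit) ℤ) * TM 1 (Pi.single j 1) 1
          = TM 1 w 1 * (g : Matrix (Fin m ⊕ Unit) (Fin m ⊕ Unit) ℤ) := by
        have h3 := congrArg (fun z => z * g)
          (Subtype.ext hw : g * _ * g⁻¹ = ⟨TM 1 w 1, by rw [TM_det]; simp⟩)
        simp only [inv_mul_cancel_right] at h3
        have := congrArg (Subtype.val) h3
        exact this
      have := congrFun (congrFun h2 (Sum.inr ())) (Sum.inr ())
      simp [Matrix.mul_apply, TM, colM, scM, Fintype.sum_sum_type,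
        Pi.single_apply, Finset.sum_ite_eq'] at this
      simpa using this
    set B : Matrix (Fin m) (Fin m) ℤ :=
      Matrix.of fun i j => (g : Matrix (Fin m ⊕ Unit) (Fin m ⊕ Unit) ℤ) (Sum.inl i) (Sum.inl j)
      with hB
    set x : Fin m → ℤ :=
      fun i => (g : Matrix (Fin m ⊕ Unit) (Fin m ⊕ Unit) ℤ) (Sum.inl i) (Sum.inr ()) with hx
    set ε : ℤ := (g : Matrix (Fin m ⊕ Unit) (Fin m ⊕ Unit) ℤ) (Sum.inr ()) (Sum.inr ()) with hε
    have hcoe : (g : Matrix (Fin m ⊕ Unit) (Fin m ⊕ Unit) ℤ) = TM B x ε := by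
      ext (i | i) (j | j)
      · simp [TM, colM, scM, hB]
      · simp [TM, colM, scM, hx]
      · simp only [TM, fromBlocks_apply₂₁, Matrix.zero_apply]
        exact key j
      · simp [TM, colM, scM, hε]
    have hdet : B.det * ε = 1 := by
      rw [← TM_det B x ε, ← hcoe]
      exact g.property
    have hunit : IsUnit ε := IsUnit.of_mul_eq_one (a := ε) B.det (by rw [mul_comm]; exact hdet)
    have hor := Int.isUnit_iff.mp hunit
    have hdB : B.det = ε := by
      rcases hor with h | h <;> rw [h] at hdet ⊢ <;> linarith
    exact ⟨B, x, ε, hor, hdB, by rw [hcoe]; rfl⟩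
  · rintro ⟨B, x, ε, hor, hdB, hcoe⟩
    have hcoe' : (g : Matrix (Fin m ⊕ Unit) (Fin m ⊕ Unit) ℤ) = TM B x ε := hcoe
    have hε2 : ε * ε = 1 := by rcases hor with h | h <;> rw [h] <;> ring
    set B' : Matrix (Fin m) (Fin m) ℤ := ε • B.adjugate with hB'
    set y : Fin m → ℤ := -(ε • (B' *ᵥ x)) with hy
    have hBB' : B * B' = 1 := by
      rw [hB', Matrix.mul_smul, Matrix.mul_adjugate, hdB, smul_smul, hε2, one_smul]
    have hB'B : B' * B = 1 := mul_eq_one_comm.mp hBB'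
    have hmul1 : TM B x ε * TM B' y ε = 1 := by
      rw [TM_mul, hBB', hε2]
      have : B *ᵥ y + ε • x = 0 := by
        rw [hy, Matrix.mulVec_neg, Matrix.mulVec_smul, Matrix.mulVec_mulVec, hBB',
          Matrix.one_mulVec]
        simp
      rw [this, TM_one]
    have hginv : (↑(g⁻¹) : Matrix (Fin m ⊕ Unit) (Fin m ⊕ Unit) ℤ) = TM B' y ε := by
      calc (↑(g⁻¹) : Matrix (Fin m ⊕ Unit) (Fin m ⊕ Unit) ℤ)
          = ↑(g⁻¹) * ((g : Matrix (Fin m ⊕ Unit) (Fin m ⊕ Unit) ℤ) * TM B' y ε) := by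
            rw [hcoe', hmul1, mul_one]
        _ = TM B' y ε := by
            rw [← mul_assoc, ← Matrix.SpecialLinearGroup.coe_mul, inv_mul_cancel,
              Matrix.SpecialLinearGroup.coe_one, one_mul]
    rw [Subgroup.mem_normalizer_iff]
    intro h
    rw [mem_Hsub_iff, mem_Hsub_iff]
    constructor
    · rintro ⟨v, hv⟩
      refine ⟨B *ᵥ y + ε • (B *ᵥ v + 1 • x), ?_⟩
      rw [Matrix.SpecialLinearGroup.coe_mul, Matrix.SpecialLinearGroup.coe_mul,
        hginv, hcoe', hv, TM_mul, TM_mul]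
      simp only [Matrix.mul_one, mul_one]
      rw [hBB', hε2]
      rfl
    · rintro ⟨w, hw⟩
      have hh : h = g⁻¹ * (g * h * g⁻¹) * g := by group
      refine ⟨B' *ᵥ x + ε • (B' *ᵥ w + 1 • y), ?_⟩
      rw [hh, Matrix.SpecialLinearGroup.coe_mul, Matrix.SpecialLinearGroup.coe_mul,
        hginv, hcoe', hw, TM_mul, TM_mul]
      simp only [Matrix.mul_one, mul_one]
      rw [hB'B, hε2]
      rfl
end

section
/- Let n ≥ 2 and let H be the subgroup of SL_n(ℤ) of matrices [[Id, v],[0,1]] with v ∈ ℤ^{n-1}. Then the normalizer of H in SL_n(ℤ) has infinite index in SL_n(ℤ). -/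
open Matrix
namespace Stmt8Aux
variable (m : ℕ) (i₀ : Fin m)

def Lmat (t : ℤ) : Matrix (Fin m ⊕ Unit) (Fin m ⊕ Unit) ℤ :=
  Matrix.fromBlocks 1 0 (Matrix.of fun _ j => if j = i₀ then t else 0) 1

lemma det_Lmat (t : ℤ) : (Lmat m i₀ t).det = 1 := by
  rw [Lmat, Matrix.det_fromBlocks_zero₁₂]
  simp

def L (t : ℤ) : Matrix.SpecialLinearGroup (Fin m ⊕ Unit) ℤ :=
  ⟨Lmat m i₀ t, det_Lmat m i₀ t⟩

lemma L_mul (s t : ℤ) : L m i₀ s * L m i₀ t = L m i₀ (s + t) := by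
  apply Subtype.ext
  show Lmat m i₀ s * Lmat m i₀ t = Lmat m i₀ (s + t)
  rw [Lmat, Lmat, Lmat, Matrix.fromBlocks_multiply]
  ext (i | i) (j | j) <;> simp [Matrix.one_apply] <;> split <;> simp

lemma L_zero : L m i₀ 0 = 1 := by
  apply Subtype.ext
  show Lmat m i₀ 0 = 1
  rw [Lmat]
  ext (i | i) (j | j) <;> simp [Matrix.one_apply]

lemma L_inv (t : ℤ) : (L m i₀ t)⁻¹ = L m i₀ (-t) := by
  rw [inv_eq_of_mul_eq_one_right]
  rw [L_mul, add_neg_cancel, L_zero]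

def Umat : Matrix (Fin m ⊕ Unit) (Fin m ⊕ Unit) ℤ :=
  Matrix.fromBlocks 1 (Matrix.of fun i (_ : Unit) => if i = i₀ then (1 : ℤ) else 0) 0 1

lemma det_Umat : (Umat m i₀).det = 1 := by
  rw [Umat, Matrix.det_fromBlocks_zero₂₁]
  simp

def U : Matrix.SpecialLinearGroup (Fin m ⊕ Unit) ℤ := ⟨Umat m i₀, det_Umat m i₀⟩

lemma U_mem : U m i₀ ∈ Hsub m := ⟨fun i => if i = i₀ then 1 else 0, rfl⟩

lemma eq_zero_of_L_mem_normalizer (t : ℤ) (h : L m i₀ t ∈ Subgroup.normalizer ((Hsub m : Subgroup _) : Set (Matrix.SpecialLinearGroup (Fin m ⊕ Unit) ℤ))) :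
    t = 0 := by
  rw [Subgroup.mem_normalizer_iff] at h
  have hc : L m i₀ t * U m i₀ * (L m i₀ t)⁻¹ ∈ Hsub m := (h _).mp (U_mem m i₀)
  rw [L_inv] at hc
  obtain ⟨v, hv⟩ := hc
  have hmat : (Lmat m i₀ t * Umat m i₀ * Lmat m i₀ (-t)) =
      Matrix.fromBlocks 1 (Matrix.of fun i (_ : Unit) => v i) 0 1 := hv
  have h2 := congrFun (congrFun hmat (Sum.inl i₀)) (Sum.inl i₀)
  simp [Lmat, Umat, Matrix.mul_apply, Fintype.sum_sum_type, Matrix.one_apply,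
    Finset.sum_ite_eq, Matrix.fromBlocks] at h2
  omega

end Stmt8Aux

open Stmt8Aux in
/-- The normalizer of H has infinite index in SL_n(ℤ) (n = m+1 ≥ 2);
`Subgroup.index = 0` means infinite index. -/
theorem stmt_8 (m : ℕ) (hm : 1 ≤ m) :
    (Subgroup.normalizer ((Hsub m : Subgroup _) : Set (Matrix.SpecialLinearGroup (Fin m ⊕ Unit) ℤ))).index = 0 := by
  have i0 : Fin m := ⟨0, hm⟩
  have hf : Function.Injective
      (fun t : ℤ => (QuotientGroup.mk (L m i0 t) :
        _ ⧸ Subgroup.normalizer ((Hsub m : Subgroup _) : Set (Matrix.SpecialLinearGroup (Fin m ⊕ Unit) ℤ)))) := by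
    intro s t hst
    have : (L m i0 s)⁻¹ * L m i0 t ∈ Subgroup.normalizer ((Hsub m : Subgroup _) : Set (Matrix.SpecialLinearGroup (Fin m ⊕ Unit) ℤ)) :=
      (QuotientGroup.eq).mp hst
    rw [L_inv, Stmt8Aux.L_mul] at this
    have := eq_zero_of_L_mem_normalizer m i0 _ this
    omega
  have : Infinite ((Matrix.SpecialLinearGroup (Fin m ⊕ Unit) ℤ) ⧸ Subgroup.normalizer ((Hsub m : Subgroup _) : Set (Matrix.SpecialLinearGroup (Fin m ⊕ Unit) ℤ))) :=
    Infinite.of_injective _ hf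
  rw [Subgroup.index_eq_card]
  exact Nat.card_eq_zero_of_infinite
end

section
/- For every n ≥ 2 there exists r = r(n) ≥ 1 depending only on n such that every virtually unipotent matrix g ∈ SL_n(ℤ) satisfies (g^r - Id)^n = 0. -/
open Polynomial Nat

lemma two_pow_le_totient_sq (a : ℕ) : 2 ^ a ≤ 2 * Nat.totient (2 ^ a) ^ 2 := by
  rcases Nat.eq_zero_or_pos a with rfl | hapos
  · simp
  · rw [Nat.totient_prime_pow Nat.prime_two hapos]
    calc 2 ^ a ≤ 2 ^ (2 * a - 1) := Nat.pow_le_pow_right (by omega) (by omega)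
      _ = 2 * (2 ^ (a - 1) * (2 - 1)) ^ 2 := by
          rw [show (2:ℕ) - 1 = 1 from rfl, mul_one, ← pow_mul, ← pow_succ']
          congr 1; omega

lemma odd_le_totient_sq : ∀ q : ℕ, Odd q → q ≤ q.totient ^ 2 := by
  intro q
  induction q using Nat.recOnPosPrimePosCoprime with
  | prime_pow p k hp hk =>
      intro hodd
      have hpodd : Odd p := by
        rcases Nat.even_or_odd p with he | ho
        · exfalso
          obtain ⟨c, hc⟩ := he
          have : (2 : ℕ) ∣ p ^ k := Dvd.dvd.pow ⟨c, by omega⟩ (by omega)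
          rw [Nat.odd_iff] at hodd
          omega
        · exact ho
      have h3 : 3 ≤ p := by
        have := hp.two_le
        have : p ≠ 2 := by rintro rfl; rw [Nat.odd_iff] at hpodd; omega
        omega
      have htot : (p ^ k).totient = p ^ (k - 1) * (p - 1) :=
        Nat.totient_prime_pow hp hk
      rw [htot]
      obtain ⟨t, rfl⟩ : ∃ t, p = t + 1 := ⟨p - 1, by omega⟩
      have ht : 2 ≤ t := by omega
      have hple : t + 1 ≤ t ^ 2 := by nlinarith
      calc (t + 1) ^ k ≤ (t + 1) ^ (2 * k - 1) := Nat.pow_le_pow_right (by omega) (by omega)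
        _ = (t + 1) ^ (k - 1) * (t + 1) ^ (k - 1) * (t + 1) := by
            rw [← pow_add, ← pow_succ]; congr 1; omega
        _ ≤ (t + 1) ^ (k - 1) * (t + 1) ^ (k - 1) * t ^ 2 := Nat.mul_le_mul_left _ hple
        _ = ((t + 1) ^ (k - 1) * (t + 1 - 1)) ^ 2 := by simp; ring
  | zero => intro h; simp at h
  | one => intro _; simp
  | coprime a b ha hb hab iha ihb =>
      intro hodd
      rw [Nat.odd_mul] at hodd
      calc a * b ≤ a.totient ^ 2 * b.totient ^ 2 := Nat.mul_le_mul (iha hodd.1) (ihb hodd.2)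
        _ = (a.totient * b.totient) ^ 2 := by ring
        _ ≤ (a * b).totient ^ 2 := Nat.pow_le_pow_left (Nat.totient_super_multiplicative a b) 2

lemma le_two_mul_totient_sq {k : ℕ} (hk : k ≠ 0) : k ≤ 2 * k.totient ^ 2 := by
  have h2 : (2 : ℕ).Prime := Nat.prime_two
  set a := k.factorization 2 with ha
  set q := k / 2 ^ a with hq
  have hsplit : 2 ^ a * q = k := Nat.ordProj_mul_ordCompl_eq_self k 2
  have hqodd : Odd q := Nat.odd_iff.mpr (by
    have : ¬ 2 ∣ q := Nat.not_dvd_ordCompl h2 hk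
    omega)
  have hcop : Nat.Coprime (2 ^ a) q :=
    Nat.coprime_ordCompl h2 hk |>.pow_left _
  have htot : k.totient = (2 ^ a).totient * q.totient := by
    rw [← hsplit, Nat.totient_mul hcop]
  calc k = 2 ^ a * q := hsplit.symm
    _ ≤ (2 * (2 ^ a).totient ^ 2) * (q.totient ^ 2) :=
        Nat.mul_le_mul (two_pow_le_totient_sq a) (odd_le_totient_sq q hqodd)
    _ = 2 * ((2 ^ a).totient * q.totient) ^ 2 := by ring
    _ = 2 * k.totient ^ 2 := by rw [htot]

lemma nilp_pow_eq_zero {R : Type*} [CommRing R] [IsDomain R] {n : ℕ}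
    (N : Matrix (Fin n) (Fin n) R) (h : IsNilpotent N) : N ^ n = 0 := by
  let e : Matrix (Fin n) (Fin n) R ≃ₐ[R] _ := Matrix.toLinAlgEquiv'
  have hφ : IsNilpotent (e N) := h.map e
  have hc : (e N).charpoly = X ^ Module.finrank R (Fin n → R) :=
    hφ.charpoly_eq_X_pow_finrank
  have hfr : Module.finrank R (Fin n → R) = n := by simp
  have h1 : aeval (e N) ((e N).charpoly) = 0 := LinearMap.aeval_self_charpoly _
  rw [hc, hfr, aeval_X_pow] at h1
  have : e (N ^ n) = 0 := by rw [map_pow]; exact h1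
  exact e.injective (this.trans (map_zero e).symm)

variable {n : ℕ}

lemma charpoly_isRoot_of_mem_spectrum {M : Matrix (Fin n) (Fin n) ℂ} {μ : ℂ}
    (h : μ ∈ spectrum ℂ M) : (Matrix.charpoly M).IsRoot μ := by
  let e := Matrix.toLinAlgEquiv' (R := ℂ) (n := Fin n)
  let f := e M
  have hspec : μ ∈ spectrum ℂ f := by
    rwa [AlgEquiv.spectrum_eq e M]
  have hev : Module.End.HasEigenvalue f μ :=
    Module.End.HasEigenvalue.of_mem_spectrum hspec
  have hroot : (minpoly ℂ f).IsRoot μ := Module.End.isRoot_of_hasEigenvalue hev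
  have hdvd : minpoly ℂ f ∣ LinearMap.charpoly f :=
    minpoly.dvd ℂ f (LinearMap.aeval_self_charpoly f)
  have hch : LinearMap.charpoly f = Matrix.charpoly M := by
    have := LinearMap.charpoly_toMatrix f (Pi.basisFun ℂ (Fin n))
    rw [← this, LinearMap.toMatrix_eq_toMatrix']
    congr 1
    exact LinearMap.toMatrix'_toLin' M
  rw [← hch]
  exact hroot.dvd hdvd

lemma nilpotent_of_spectrum_subset_zero {B : Matrix (Fin n) (Fin n) ℂ}
    (h : spectrum ℂ B ⊆ {0}) : IsNilpotent B := by
  let e := Matrix.toLinAlgEquiv' (R := ℂ) (n := Fin n)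
  let f := e B
  suffices hf : IsNilpotent f by
    have := hf.map e.symm.toAlgHom
    simpa [f] using this
  have hint : IsIntegral ℂ f := Algebra.IsIntegral.isIntegral f
  have hmon : (minpoly ℂ f).Monic := minpoly.monic hint
  have hroots : ∀ μ, (minpoly ℂ f).IsRoot μ → μ = 0 := by
    intro μ hμ
    have : μ ∈ spectrum ℂ f := (Module.End.hasEigenvalue_of_isRoot hμ).mem_spectrum
    have : μ ∈ spectrum ℂ B := by rwa [AlgEquiv.spectrum_eq e B] at this
    exact h this
  have hsplit : (minpoly ℂ f).Splits := IsAlgClosed.splits _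
  have hp : minpoly ℂ f = X ^ (minpoly ℂ f).natDegree := by
    have heq := hsplit.eq_prod_roots_of_monic hmon
    have hrepl : (minpoly ℂ f).roots = Multiset.replicate (minpoly ℂ f).natDegree 0 := by
      apply Multiset.eq_replicate.mpr
      constructor
      · exact Polynomial.splits_iff_card_roots.mp hsplit
      · intro b hb
        exact hroots b (Polynomial.isRoot_of_mem_roots hb)
    rw [heq, hrepl]
    simp [Multiset.map_replicate, Multiset.prod_replicate]
  refine ⟨(minpoly ℂ f).natDegree, ?_⟩
  have := minpoly.aeval ℂ f
  rw [hp, aeval_X_pow] at this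
  exact this

/-- For every n ≥ 2 there is r = r(n) ≥ 1 such that every virtually unipotent
g ∈ SL_n(ℤ) satisfies (g^r - Id)^n = 0.  Here g is virtually unipotent if g^m is
unipotent (i.e. g^m - Id is nilpotent) for some m ≥ 1. -/
theorem stmt_12 (n : ℕ) (hn : 2 ≤ n) :
    ∃ r : ℕ, 1 ≤ r ∧ ∀ g : Matrix.SpecialLinearGroup (Fin n) ℤ,
      (∃ m : ℕ, 1 ≤ m ∧
        IsNilpotent ((g : Matrix (Fin n) (Fin n) ℤ) ^ m - 1)) →
      ((g : Matrix (Fin n) (Fin n) ℤ) ^ r - 1) ^ n = 0 := by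
  classical
  haveI : Nonempty (Fin n) := ⟨⟨0, by omega⟩⟩
  set r : ℕ := (Finset.Icc 1 (2 * n ^ 2)).lcm id with hr
  have hrpos : 1 ≤ r := by
    rcases Nat.eq_zero_or_pos r with h0 | h
    · exfalso
      rw [hr] at h0
      obtain ⟨k, hk, hk0⟩ := Finset.lcm_eq_zero_iff.mp h0
      rw [Finset.mem_Icc] at hk
      simp only [id] at hk0
      omega
    · exact h
  refine ⟨r, hrpos, ?_⟩
  rintro g ⟨m, hm, hnilp⟩
  set A : Matrix (Fin n) (Fin n) ℤ := (g : Matrix (Fin n) (Fin n) ℤ) with hA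
  set ψ : Matrix (Fin n) (Fin n) ℤ →+* Matrix (Fin n) (Fin n) ℂ :=
    (Int.castRingHom ℂ).mapMatrix with hpsi
  set M : Matrix (Fin n) (Fin n) ℂ := ψ A with hM
  have hpsiinj : Function.Injective ψ := by
    intro X Y hXY
    ext i j
    have := congrArg (fun Z => Z i j) hXY
    simpa [hpsi, Matrix.map_apply] using this
  -- M^m - 1 is nilpotent
  have h1 : IsNilpotent (M ^ m - 1) := by
    have := hnilp.map ψ
    simpa [map_pow, map_sub, map_one] using this
  obtain ⟨N, hN⟩ := h1
  have hN0 : N ≠ 0 := by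
    rintro rfl
    rw [pow_zero] at hN
    exact one_ne_zero hN
  have hsne : (spectrum ℂ M).Nonempty :=
    spectrum.nonempty_of_isAlgClosed_of_finiteDimensional ℂ M
  -- every spectral value is an m-th root of unity
  have hμm : ∀ μ ∈ spectrum ℂ M, μ ^ m = 1 := by
    intro μ hμ
    have hsm := spectrum.map_polynomial_aeval_of_nonempty M (((X : ℂ[X]) ^ m - C 1) ^ N) hsne
    have haev : aeval M (((X : ℂ[X]) ^ m - C 1) ^ N) = 0 := by
      rw [map_pow, map_sub, aeval_X_pow, aeval_C]
      simpa using hN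
    rw [haev, spectrum.zero_eq] at hsm
    have : ((X ^ m - C 1) ^ N : ℂ[X]).eval μ ∈ ({0} : Set ℂ) := by
      rw [hsm]; exact ⟨μ, hμ, rfl⟩
    simp only [Set.mem_singleton_iff, eval_pow, eval_sub, eval_pow, eval_X, eval_C] at this
    have := pow_eq_zero_iff hN0 |>.mp this
    linear_combination this
  -- every spectral value satisfies μ ^ r = 1
  have hμr : ∀ μ ∈ spectrum ℂ M, μ ^ r = 1 := by
    intro μ hμ
    have hfin : IsOfFinOrder μ :=
      isOfFinOrder_iff_pow_eq_one.mpr ⟨m, by omega, hμm μ hμ⟩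
    set k := orderOf μ with hk
    have hkpos : 0 < k := hfin.orderOf_pos
    have hprim : IsPrimitiveRoot μ k := IsPrimitiveRoot.orderOf μ
    have hmin : cyclotomic k ℚ = minpoly ℚ μ :=
      Polynomial.cyclotomic_eq_minpoly_rat hprim hkpos
    set q : ℚ[X] := (Matrix.charpoly A).map (Int.castRingHom ℚ) with hq
    have hqmonic : q.Monic := (Matrix.charpoly_monic A).map _
    have hdvd : minpoly ℚ μ ∣ q := by
      apply minpoly.dvd ℚ μ
      rw [hq, aeval_def, eval₂_eq_eval_map, Polynomial.map_map]
      have hcomp : (algebraMap ℚ ℂ).comp (Int.castRingHom ℚ) = Int.castRingHom ℂ := by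
        ext1; simp
      rw [hcomp, ← Matrix.charpoly_map]
      exact charpoly_isRoot_of_mem_spectrum hμ
    have hdeg : Nat.totient k ≤ n := by
      have h1 : (minpoly ℚ μ).natDegree = Nat.totient k := by
        rw [← hmin, natDegree_cyclotomic]
      have h2 : q.natDegree = n := by
        rw [hq, (Matrix.charpoly_monic A).natDegree_map, Matrix.charpoly_natDegree_eq_dim,
          Fintype.card_fin]
      have := Polynomial.natDegree_le_of_dvd hdvd hqmonic.ne_zero
      omega
    have hkle : k ≤ 2 * n ^ 2 := by
      have := le_two_mul_totient_sq (k := k) (by omega)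
      have h2 : Nat.totient k ^ 2 ≤ n ^ 2 := Nat.pow_le_pow_left hdeg 2
      omega
    have hkdvd : k ∣ r := by
      have : k ∈ Finset.Icc 1 (2 * n ^ 2) := Finset.mem_Icc.mpr ⟨hkpos, hkle⟩
      exact Finset.dvd_lcm this
    exact orderOf_dvd_iff_pow_eq_one.mp hkdvd
  -- M^r - 1 has spectrum ⊆ {0}
  have hspec0 : spectrum ℂ (M ^ r - 1) ⊆ {0} := by
    have hsm := spectrum.map_polynomial_aeval_of_nonempty M ((X : ℂ[X]) ^ r - C 1) hsne
    have haev : aeval M ((X : ℂ[X]) ^ r - C 1) = M ^ r - 1 := by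
      rw [map_sub, aeval_X_pow, aeval_C]; simp
    rw [haev] at hsm
    rw [hsm]
    rintro x ⟨μ, hμ, rfl⟩
    simp [hμr μ hμ]
  have hBnil : IsNilpotent (M ^ r - 1) := nilpotent_of_spectrum_subset_zero hspec0
  -- pull back to ℤ
  have hAnil : IsNilpotent (A ^ r - 1) := by
    obtain ⟨j, hj⟩ := hBnil
    refine ⟨j, hpsiinj ?_⟩
    rw [map_pow, map_sub, map_pow, map_one, map_zero]
    exact hj
  have := nilp_pow_eq_zero (A ^ r - 1) hAnil
  exact this
end

section
/- Let n ≥ 2, k ≥ 1, R = ℤ[x]/(x^{k+1}), and let N be the kernel of the homomorphism SL_n(R) → SL_n(ℤ) induced by x ↦ 0. Then N is a nilpotent group of nilpotency class at most k. -/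
open Polynomial

/-- The ring ℤ[x]/(x^{k+1}). -/
abbrev Rk (k : ℕ) : Type :=
  Polynomial ℤ ⧸ Ideal.span ({(X : Polynomial ℤ) ^ (k + 1)} : Set (Polynomial ℤ))

/-- The ring homomorphism ℤ[x]/(x^{k+1}) → ℤ induced by evaluation at 0. -/
noncomputable def ev0 (k : ℕ) : Rk k →+* ℤ :=
  Ideal.Quotient.lift _ (Polynomial.evalRingHom (0 : ℤ)) (by
    intro f hf
    rw [Ideal.mem_span_singleton] at hf
    obtain ⟨g, rfl⟩ := hf
    simp [Polynomial.eval_mul, Polynomial.eval_pow])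

/-- The induced group homomorphism SL_n(ℤ[x]/(x^{k+1})) → SL_n(ℤ). -/
noncomputable def redMap (n k : ℕ) :
    Matrix.SpecialLinearGroup (Fin n) (Rk k) →*
      Matrix.SpecialLinearGroup (Fin n) ℤ :=
  Matrix.SpecialLinearGroup.map (ev0 k)

namespace Stmt18Aux

open scoped commutatorElement

/-- The ideal (x) in ℤ[x]/(x^{k+1}). -/
noncomputable def J (k : ℕ) : Ideal (Rk k) :=
  Ideal.span {Ideal.Quotient.mk _ (X : Polynomial ℤ)}

lemma Jpow_bot (k : ℕ) : (J k) ^ (k + 1) = ⊥ := by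
  rw [J, Ideal.span_singleton_pow, ← map_pow, Ideal.span_singleton_eq_bot]
  exact Ideal.Quotient.eq_zero_iff_mem.2 (Ideal.subset_span (Set.mem_singleton _))

lemma mem_J_of_ev0 (k : ℕ) (r : Rk k) (h : ev0 k r = 0) : r ∈ J k := by
  obtain ⟨f, rfl⟩ := Ideal.Quotient.mk_surjective r
  have h0 : f.coeff 0 = 0 := by
    rw [Polynomial.coeff_zero_eq_eval_zero]
    simpa [ev0] using h
  rw [J, Ideal.mem_span_singleton]
  exact map_dvd _ (Polynomial.X_dvd_iff.2 h0)

variable {n k : ℕ}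

/-- Entry-wise: if all entries of `M` are in `I`, so are those of `M * P`. -/
lemma mul_entries_mem {I : Ideal (Rk k)} {M : Matrix (Fin n) (Fin n) (Rk k)}
    (hM : ∀ i j, M i j ∈ I) (P : Matrix (Fin n) (Fin n) (Rk k)) :
    ∀ i j, (M * P) i j ∈ I := fun i j => by
  rw [Matrix.mul_apply]
  exact Ideal.sum_mem _ fun l _ => I.mul_mem_right _ (hM i l)

lemma mul_entries_mem' {I : Ideal (Rk k)} {M : Matrix (Fin n) (Fin n) (Rk k)}
    (hM : ∀ i j, M i j ∈ I) (P : Matrix (Fin n) (Fin n) (Rk k)) :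
    ∀ i j, (P * M) i j ∈ I := fun i j => by
  rw [Matrix.mul_apply]
  exact Ideal.sum_mem _ fun l _ => I.mul_mem_left _ (hM l j)

lemma mul_entries_mem_mul {I I' : Ideal (Rk k)} {M N : Matrix (Fin n) (Fin n) (Rk k)}
    (hM : ∀ i j, M i j ∈ I) (hN : ∀ i j, N i j ∈ I') :
    ∀ i j, (M * N) i j ∈ I * I' := fun i j => by
  rw [Matrix.mul_apply]
  exact Ideal.sum_mem _ fun l _ => Ideal.mul_mem_mul (hM i l) (hN l j)

/-- Matrices congruent to 1 mod J^p form a subgroup of SL_n. -/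
noncomputable def D (n k p : ℕ) : Subgroup (Matrix.SpecialLinearGroup (Fin n) (Rk k)) where
  carrier := {A | ∀ i j, ((A : Matrix (Fin n) (Fin n) (Rk k)) - 1) i j ∈ (J k) ^ p}
  one_mem' := by intro i j; simp
  mul_mem' := by
    intro a b ha hb i j
    have h : ((a * b : Matrix.SpecialLinearGroup (Fin n) (Rk k)) : Matrix (Fin n) (Fin n) (Rk k)) - 1
        = ((a : Matrix (Fin n) (Fin n) (Rk k)) - 1) * ((b : Matrix (Fin n) (Fin n) (Rk k)) - 1)
          + ((a : Matrix (Fin n) (Fin n) (Rk k)) - 1) + ((b : Matrix (Fin n) (Fin n) (Rk k)) - 1) := by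
      rw [Matrix.SpecialLinearGroup.coe_mul]
      simp only [sub_mul, mul_sub, mul_one, one_mul]
      abel
    rw [h, Matrix.add_apply, Matrix.add_apply]
    exact add_mem (add_mem (mul_entries_mem ha _ i j) (ha i j)) (hb i j)
  inv_mem' := by
    intro a ha i j
    have h1 : ((a⁻¹ : Matrix.SpecialLinearGroup (Fin n) (Rk k)) : Matrix (Fin n) (Fin n) (Rk k))
        * (a : Matrix (Fin n) (Fin n) (Rk k)) = 1 := by
      rw [← Matrix.SpecialLinearGroup.coe_mul, inv_mul_cancel,
        Matrix.SpecialLinearGroup.coe_one]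
    have h : ((a⁻¹ : Matrix.SpecialLinearGroup (Fin n) (Rk k)) : Matrix (Fin n) (Fin n) (Rk k)) - 1
        = ((a⁻¹ : Matrix.SpecialLinearGroup (Fin n) (Rk k)) : Matrix (Fin n) (Fin n) (Rk k))
          * (1 - (a : Matrix (Fin n) (Fin n) (Rk k))) := by
      rw [mul_sub, mul_one, h1]
    rw [h]
    refine mul_entries_mem' (fun i' j' => ?_) _ i j
    have : ((1 : Matrix (Fin n) (Fin n) (Rk k)) - a) i' j'
        = -(((a : Matrix (Fin n) (Fin n) (Rk k)) - 1) i' j') := by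
      simp [Matrix.sub_apply]
    rw [this]
    exact neg_mem (ha i' j')

lemma commutator_mem_D {p q : ℕ} {A B : Matrix.SpecialLinearGroup (Fin n) (Rk k)}
    (hA : A ∈ D n k p) (hB : B ∈ D n k q) : ⁅A, B⁆ ∈ D n k (p + q) := by
  have hone : (((B * A) : Matrix.SpecialLinearGroup (Fin n) (Rk k)) : Matrix (Fin n) (Fin n) (Rk k))
      * (((B * A)⁻¹ : Matrix.SpecialLinearGroup (Fin n) (Rk k)) : Matrix (Fin n) (Fin n) (Rk k)) = 1 := by
    rw [← Matrix.SpecialLinearGroup.coe_mul, mul_inv_cancel, Matrix.SpecialLinearGroup.coe_one]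
  have hone' : ((B : Matrix (Fin n) (Fin n) (Rk k)) * (A : Matrix (Fin n) (Fin n) (Rk k)))
      * (((B * A)⁻¹ : Matrix.SpecialLinearGroup (Fin n) (Rk k)) : Matrix (Fin n) (Fin n) (Rk k)) = 1 := by
    rw [← Matrix.SpecialLinearGroup.coe_mul B A]; exact hone
  have hcoe : ((⁅A, B⁆ : Matrix.SpecialLinearGroup (Fin n) (Rk k)) : Matrix (Fin n) (Fin n) (Rk k))
      = ((A : Matrix (Fin n) (Fin n) (Rk k)) * (B : Matrix (Fin n) (Fin n) (Rk k)))
        * (((B * A)⁻¹ : Matrix.SpecialLinearGroup (Fin n) (Rk k)) : Matrix (Fin n) (Fin n) (Rk k)) := by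
    rw [show ⁅A, B⁆ = (A * B) * (B * A)⁻¹ by group, Matrix.SpecialLinearGroup.coe_mul,
      Matrix.SpecialLinearGroup.coe_mul]
  have h : ((⁅A, B⁆ : Matrix.SpecialLinearGroup (Fin n) (Rk k)) : Matrix (Fin n) (Fin n) (Rk k)) - 1
      = (((A : Matrix (Fin n) (Fin n) (Rk k)) - 1) * ((B : Matrix (Fin n) (Fin n) (Rk k)) - 1)
          - ((B : Matrix (Fin n) (Fin n) (Rk k)) - 1) * ((A : Matrix (Fin n) (Fin n) (Rk k)) - 1))
        * (((B * A)⁻¹ : Matrix.SpecialLinearGroup (Fin n) (Rk k)) : Matrix (Fin n) (Fin n) (Rk k)) := by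
    have e1 : ((A : Matrix (Fin n) (Fin n) (Rk k)) - 1) * ((B : Matrix (Fin n) (Fin n) (Rk k)) - 1)
          - ((B : Matrix (Fin n) (Fin n) (Rk k)) - 1) * ((A : Matrix (Fin n) (Fin n) (Rk k)) - 1)
        = (A : Matrix (Fin n) (Fin n) (Rk k)) * (B : Matrix (Fin n) (Fin n) (Rk k))
          - (B : Matrix (Fin n) (Fin n) (Rk k)) * (A : Matrix (Fin n) (Fin n) (Rk k)) := by
      simp only [sub_mul, mul_sub, mul_one, one_mul]
      abel
    rw [e1, sub_mul, hone', hcoe]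
  intro i j
  rw [h]
  refine mul_entries_mem (fun i' j' => ?_) _ i j
  rw [Matrix.sub_apply]
  have hle : J k ^ p * J k ^ q ≤ J k ^ (p + q) := le_of_eq (pow_add (J k) p q).symm
  refine sub_mem (hle (mul_entries_mem_mul hA hB i' j')) (hle ?_)
  have := mul_entries_mem_mul hB hA i' j'
  rwa [mul_comm ((J k) ^ q)] at this

lemma mem_D_one_of_ker {A : Matrix.SpecialLinearGroup (Fin n) (Rk k)}
    (hA : A ∈ (redMap n k).ker) : A ∈ D n k 1 := by
  intro i j
  apply le_of_eq (pow_one (J k)).symm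
  have h1 : redMap n k A = 1 := hA
  have h2 : ev0 k ((A : Matrix (Fin n) (Fin n) (Rk k)) i j) = (1 : Matrix (Fin n) (Fin n) ℤ) i j := by
    have := congrArg (fun M : Matrix.SpecialLinearGroup (Fin n) ℤ =>
      (M : Matrix (Fin n) (Fin n) ℤ) i j) h1
    exact this
  apply mem_J_of_ev0
  rw [Matrix.sub_apply, map_sub, h2]
  rcases eq_or_ne i j with rfl | hij
  · simp
  · simp [Matrix.one_apply_ne hij]

end Stmt18Aux

open Stmt18Aux in
/-- The kernel N of SL_n(ℤ[x]/(x^{k+1})) → SL_n(ℤ) is nilpotent of class at most k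
(its lower central series vanishes at stage k). -/
theorem stmt_18 (n k : ℕ) (hn : 2 ≤ n) (hk : 1 ≤ k) :
    Group.IsNilpotent ((redMap n k).ker) ∧
      lowerCentralSeries ((redMap n k).ker) k = ⊥ := by
  set G := (redMap n k).ker with hG
  have key : ∀ p, lowerCentralSeries G p ≤ D n k (p + 1) := by
    intro p
    induction p with
    | zero =>
      intro g hg
      exact mem_D_one_of_ker hg
    | succ p ih =>
      rw [show lowerCentralSeries G (p + 1) = ⁅lowerCentralSeries G p, G⁆ from rfl,
        Subgroup.commutator_le]
      intro g hg h hh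
      have hgD : g ∈ D n k (p + 1) := ih hg
      have hhD : h ∈ D n k 1 := mem_D_one_of_ker hh
      exact commutator_mem_D hgD hhD
  have hbot : lowerCentralSeries G k = ⊥ := by
    rw [eq_bot_iff]
    intro g hg
    have hD : (g : Matrix.SpecialLinearGroup (Fin n) (Rk k)) ∈ D n k (k + 1) := key k hg
    have hzero : ((g : Matrix.SpecialLinearGroup (Fin n) (Rk k)) : Matrix (Fin n) (Fin n) (Rk k)) - 1 = 0 := by
      ext i j
      have := hD i j
      rw [Jpow_bot, Ideal.mem_bot] at this
      simpa using this
    have hone : (g : Matrix.SpecialLinearGroup (Fin n) (Rk k)) = 1 :=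
      Subtype.ext (by rw [← sub_eq_zero]; exact hzero)
    rw [Subgroup.mem_bot]
    exact hone
  exact ⟨(Subgroup.isNilpotent_iff_lowerCentralSeries G).2 ⟨k, hbot⟩, hbot⟩
end
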